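/- arXiv:2501.03367 — 2 statements merged into one kernel-verified Lean document; each statement's English description precedes it below -/
import Mathlib

section
/- For all i ∈ {1,…,J} and j ∈ {1,…,K}: Σ_{k,ℓ=1}^n c(λ_k,λ_ℓ) ⟨v_k, Pθ_i v_ℓ⟩ ⟨v_ℓ, Pφ_j v_k⟩ = (i/2)·Tr[{Φ_θ(G_i), [G(θ), Ψ_φ†(H_j)]} ρ(θ)]; that is, the Kubo–Mori information matrix elements of the evolved quantum Boltzmann machine with respect to mixed θ and φ parameters are I^KM_{ij}(θ,φ) = (i/2)⟨{Φ_θ(G_i), [G(θ), Ψ_φ†(H_j)]}⟩_{ρ(θ)}. -/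
open MeasureTheory Matrix

noncomputable section

attribute [local instance] Matrix.normedAddCommGroup Matrix.normedSpace

/-- Square complex matrices. -/
abbrev Mat (n : ℕ) := Matrix (Fin n) (Fin n) ℂ

/-- The parameterized Hamiltonian `G(θ) = ∑ j, θ j • G j`. -/
def Gm {n J : ℕ} (G : Fin J → Mat n) (θ : Fin J → ℝ) : Mat n := ∑ j, (θ j : ℂ) • G j

/-- The parameterized Hamiltonian `H(φ) = ∑ k, φ k • H k`. -/
def Hm {n K : ℕ} (H : Fin K → Mat n) (φ : Fin K → ℝ) : Mat n := ∑ k, (φ k : ℂ) • H k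

/-- The partition function `Z(θ) = Tr[exp (−G(θ))]` (a positive real). -/
def Zpf {n J : ℕ} (G : Fin J → Mat n) (θ : Fin J → ℝ) : ℝ :=
  (Matrix.trace (NormedSpace.exp (-(Gm G θ)))).re

/-- The quantum Boltzmann machine `ρ(θ) = exp(−G(θ))/Z(θ)`. -/
def qbm {n J : ℕ} (G : Fin J → Mat n) (θ : Fin J → ℝ) : Mat n :=
  ((Zpf G θ : ℂ))⁻¹ • NormedSpace.exp (-(Gm G θ))

/-- The unitary `exp(−i H(φ))`. -/
def uH {n K : ℕ} (H : Fin K → Mat n) (φ : Fin K → ℝ) : Mat n :=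
  NormedSpace.exp (-(Complex.I • Hm H φ))

/-- The unitary `exp(i H(φ))`. -/
def uH' {n K : ℕ} (H : Fin K → Mat n) (φ : Fin K → ℝ) : Mat n :=
  NormedSpace.exp (Complex.I • Hm H φ)

/-- The evolved quantum Boltzmann machine `ω(θ,φ) = exp(−iH(φ)) ρ(θ) exp(iH(φ))`. -/
def eqbm {n J K : ℕ} (G : Fin J → Mat n) (H : Fin K → Mat n)
    (θ : Fin J → ℝ) (φ : Fin K → ℝ) : Mat n :=
  uH H φ * qbm G θ * uH' H φ

/-- The high-peak-tent probability density `p(t) = (2/π) ln |coth (π t / 2)|`. -/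
def hpt (t : ℝ) : ℝ :=
  (2 / Real.pi) * Real.log |Real.cosh (Real.pi * t / 2) / Real.sinh (Real.pi * t / 2)|

/-- The channel `Φ_θ(X) = ∫ℝ p(t) exp(−iG(θ)t) X exp(iG(θ)t) dt`. -/
def chanΦ {n J : ℕ} (G : Fin J → Mat n) (θ : Fin J → ℝ) (X : Mat n) : Mat n :=
  ∫ t : ℝ, hpt t •
    (NormedSpace.exp ((-(Complex.I * (t : ℂ))) • Gm G θ) * X *
      NormedSpace.exp ((Complex.I * (t : ℂ)) • Gm G θ))

/-- The channel `Ψ_φ(X) = ∫₀¹ exp(−iH(φ)t) X exp(iH(φ)t) dt`. -/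
def chanΨ {n K : ℕ} (H : Fin K → Mat n) (φ : Fin K → ℝ) (X : Mat n) : Mat n :=
  ∫ t in (0:ℝ)..1,
    (NormedSpace.exp ((-(Complex.I * (t : ℂ))) • Hm H φ) * X *
      NormedSpace.exp ((Complex.I * (t : ℂ)) • Hm H φ))

/-- The adjoint channel `Ψ_φ†(X) = ∫₀¹ exp(iH(φ)t) X exp(−iH(φ)t) dt`. -/
def chanΨdag {n K : ℕ} (H : Fin K → Mat n) (φ : Fin K → ℝ) (X : Mat n) : Mat n :=
  ∫ t in (0:ℝ)..1,
    (NormedSpace.exp ((Complex.I * (t : ℂ)) • Hm H φ) * X *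
      NormedSpace.exp ((-(Complex.I * (t : ℂ))) • Hm H φ))

/-- `⟨x, y⟩ = ∑ m, conj (x m) * y m`. -/
def dotc {n : ℕ} (x y : Fin n → ℂ) : ℂ := ∑ m, (starRingEnd ℂ) (x m) * y m

/-- The eigenvalues `λ_k = exp(−μ_k)/(∑_m exp(−μ_m))` of `ρ(θ)`. -/
def lamd {n : ℕ} (μ : Fin n → ℝ) (k : Fin n) : ℝ := Real.exp (-μ k) / ∑ m, Real.exp (-μ m)

/-- The partial derivative of `ω(θ,φ)` with respect to `θ_j`:
`Pθ_j = −(1/2){exp(−iH(φ)) Φ_θ(G_j) exp(iH(φ)), ω(θ,φ)} + ⟨G_j⟩_{ρ(θ)} ω(θ,φ)`. -/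
def Pθ {n J K : ℕ} (G : Fin J → Mat n) (H : Fin K → Mat n)
    (θ : Fin J → ℝ) (φ : Fin K → ℝ) (j : Fin J) : Mat n :=
  -(1 / 2 : ℂ) •
      (uH H φ * chanΦ G θ (G j) * uH' H φ * eqbm G H θ φ
        + eqbm G H θ φ * (uH H φ * chanΦ G θ (G j) * uH' H φ))
    + Matrix.trace (G j * qbm G θ) • eqbm G H θ φ

/-- The partial derivative of `ω(θ,φ)` with respect to `φ_k`: `Pφ_k = i[ω(θ,φ), Ψ_φ(H_k)]`. -/
def Pφ {n J K : ℕ} (G : Fin J → Mat n) (H : Fin K → Mat n)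
    (θ : Fin J → ℝ) (φ : Fin K → ℝ) (k : Fin K) : Mat n :=
  Complex.I • (eqbm G H θ φ * chanΨ H φ (H k) - chanΨ H φ (H k) * eqbm G H θ φ)

/-- The coefficient `c(x,y) = (ln x − ln y)/(x − y)` for `x ≠ y`, and `c(x,x) = 1/x`. -/
def cKM (x y : ℝ) : ℝ := if x = y then 1 / x else (Real.log x - Real.log y) / (x - y)


/-! ### Auxiliary lemmas -/

section Aux

lemma exp_smul_mul {n : ℕ} (A : Mat n) (a b : ℂ) :
    NormedSpace.exp (a • A) * NormedSpace.exp (b • A) = NormedSpace.exp ((a+b) • A) := by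
  rw [← Matrix.exp_add_of_commute, add_smul]
  exact ((Commute.refl A).smul_left a).smul_right b

lemma conj_chanPsi {n : ℕ} (B X : Mat n) :
    NormedSpace.exp (Complex.I • B) *
      (∫ t in (0:ℝ)..1, (NormedSpace.exp ((-(Complex.I * (t:ℂ))) • B) * X *
        NormedSpace.exp ((Complex.I * (t:ℂ)) • B))) *
      NormedSpace.exp (-(Complex.I • B))
    = ∫ t in (0:ℝ)..1, (NormedSpace.exp ((Complex.I * (t:ℂ)) • B) * X *
        NormedSpace.exp ((-(Complex.I * (t:ℂ))) • B)) := by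
  set U' := NormedSpace.exp (Complex.I • B) with hU'
  set U := NormedSpace.exp (-(Complex.I • B)) with hU
  set f : ℝ → Mat n := fun t => NormedSpace.exp ((-(Complex.I * (t:ℂ))) • B) * X *
        NormedSpace.exp ((Complex.I * (t:ℂ)) • B) with hf
  set g : ℝ → Mat n := fun t => NormedSpace.exp ((Complex.I * (t:ℂ)) • B) * X *
        NormedSpace.exp ((-(Complex.I * (t:ℂ))) • B) with hg
  have hcont : Continuous f := by
    letI : SeminormedRing (Mat n) := Matrix.linftyOpSemiNormedRing
    letI : NormedRing (Mat n) := Matrix.linftyOpNormedRing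
    letI : NormedAlgebra ℂ (Mat n) := Matrix.linftyOpNormedAlgebra
    letI : NormedAlgebra ℚ (Mat n) := NormedAlgebra.restrictScalars ℚ ℂ (Mat n)
    haveI : @CompleteSpace (Mat n) PseudoMetricSpace.toUniformSpace := FiniteDimensional.complete ℂ (Mat n)
    have h1 : Continuous (fun t : ℝ => NormedSpace.exp ((-(Complex.I * (t:ℂ))) • B)) :=
      NormedSpace.exp_continuous.comp
        ((continuous_const.mul Complex.continuous_ofReal).neg.smul continuous_const)
    have h2 : Continuous (fun t : ℝ => NormedSpace.exp ((Complex.I * (t:ℂ)) • B)) :=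
      NormedSpace.exp_continuous.comp
        ((continuous_const.mul Complex.continuous_ofReal).smul continuous_const)
    exact (h1.mul continuous_const).mul h2
  have hInt := hcont.intervalIntegrable (μ := volume) 0 1
  set L : Mat n →L[ℂ] Mat n :=
    LinearMap.toContinuousLinearMap ((LinearMap.mulRight ℂ U).comp (LinearMap.mulLeft ℂ U')) with hL
  have hLval : ∀ Y : Mat n, L Y = U' * Y * U := fun Y => rfl
  have step1 : U' * (∫ t in (0:ℝ)..1, f t) * U = ∫ t in (0:ℝ)..1, U' * f t * U := by
    rw [← hLval]
    exact (L.intervalIntegral_comp_comm hInt).symm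
  have step2 : ∀ t : ℝ, U' * f t * U = g (1 - t) := by
    intro t
    have e1 : U' * NormedSpace.exp ((-(Complex.I * (t:ℂ))) • B)
        = NormedSpace.exp ((Complex.I * ((1:ℝ) - t : ℝ)) • B) := by
      rw [hU', exp_smul_mul]
      push_cast; ring_nf
    have e2 : NormedSpace.exp ((Complex.I * (t:ℂ)) • B) * U
        = NormedSpace.exp ((-(Complex.I * ((1:ℝ) - t : ℝ))) • B) := by
      rw [hU, neg_smul, ← neg_smul _ B, exp_smul_mul]
      congr 1; push_cast; rw [← neg_smul]; congr 1; ring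
    simp only [hf, hg]
    rw [← mul_assoc, ← mul_assoc, e1, mul_assoc, mul_assoc, e2, ← mul_assoc]
  rw [step1]
  calc (∫ t in (0:ℝ)..1, U' * f t * U) = ∫ t in (0:ℝ)..1, g (1 - t) := by
        simp only [step2]
    _ = ∫ t in ((1:ℝ)-1)..((1:ℝ)-0), g t := intervalIntegral.integral_comp_sub_left g 1
    _ = ∫ t in (0:ℝ)..1, g t := by norm_num

lemma entry_eq {n : ℕ} (u : Fin n → Fin n → ℂ) (M : Mat n) (k l : Fin n) :
    ((Matrix.of fun m k => u k m)ᴴ * M * (Matrix.of fun m k => u k m)) k l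
      = dotc (u k) (M.mulVec (u l)) := by
  simp only [Matrix.mul_apply, Matrix.conjTranspose_apply, Matrix.of_apply, dotc,
    Matrix.mulVec, dotProduct, Finset.sum_mul, Finset.mul_sum]
  rw [Finset.sum_comm]
  refine Finset.sum_congr rfl fun m _ => Finset.sum_congr rfl fun p _ => by
    simp only [starRingEnd_apply]; ring

lemma dotc_mulVec {n : ℕ} (U : Mat n) (x z : Fin n → ℂ) :
    dotc (U.mulVec x) z = dotc x (Uᴴ.mulVec z) := by
  simp only [dotc, Matrix.mulVec, dotProduct, Matrix.conjTranspose_apply, map_sum,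
    _root_.map_mul, Finset.sum_mul, Finset.mul_sum]
  rw [Finset.sum_comm]
  refine Finset.sum_congr rfl fun m _ => Finset.sum_congr rfl fun p _ => by
    simp only [starRingEnd_apply]; ring

lemma ortho_unitary {n : ℕ} (u : Fin n → Fin n → ℂ)
    (hortho : ∀ k l, dotc (u k) (u l) = if k = l then 1 else 0) :
    (Matrix.of fun m k => u k m)ᴴ * (Matrix.of fun m k => u k m) = 1 := by
  ext k l
  have h := hortho k l
  simp only [dotc] at h
  simp [Matrix.mul_apply, Matrix.conjTranspose_apply, Matrix.one_apply, h]

lemma alg1 {n : ℕ} (U U' Φ ρ : Mat n) (c g : ℂ) (h1 : U' * U = 1) :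
    U' * (c • (U * Φ * U' * (U * ρ * U') + (U * ρ * U') * (U * Φ * U')) + g • (U * ρ * U')) * U
      = c • (Φ * ρ + ρ * Φ) + g • ρ := by
  have hc : ∀ X : Mat n, U' * (U * X) = X := fun X => by rw [← mul_assoc, h1, one_mul]
  simp only [Matrix.mul_add, Matrix.add_mul, Matrix.mul_smul, Matrix.smul_mul, mul_assoc, hc, h1,
    mul_one]

lemma alg2 {n : ℕ} (U U' Ψ ρ : Mat n) (h1 : U' * U = 1) :
    U' * (Complex.I • ((U * ρ * U') * Ψ - Ψ * (U * ρ * U'))) * U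
      = Complex.I • (ρ * (U' * Ψ * U) - (U' * Ψ * U) * ρ) := by
  have hc : ∀ X : Mat n, U' * (U * X) = X := fun X => by rw [← mul_assoc, h1, one_mul]
  simp only [Matrix.mul_sub, Matrix.sub_mul, Matrix.mul_smul, Matrix.smul_mul, mul_assoc, hc, h1,
    mul_one]

lemma eig_mul_W {n : ℕ} (Gt : Mat n) (u : Fin n → Fin n → ℂ) (μ : Fin n → ℝ)
    (heig : ∀ k, Gt.mulVec (u k) = (μ k : ℂ) • u k) :
    Gt * (Matrix.of fun m k => u k m)
      = (Matrix.of fun m k => u k m) * Matrix.diagonal (fun k => (μ k : ℂ)) := by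
  ext m k
  have hm := congrFun (heig k) m
  simp only [Matrix.mulVec, dotProduct, Pi.smul_apply, smul_eq_mul] at hm
  rw [Matrix.mul_diagonal]
  simp only [Matrix.mul_apply, Matrix.of_apply]
  rw [show ∑ j, Gt m j * u k j = (μ k : ℂ) * u k m from hm]
  ring

lemma exp_diag_of_conj {n : ℕ} (Gt W : Mat n) (μ : Fin n → ℝ)
    (h1 : Wᴴ * W = 1) (h2 : W * Wᴴ = 1)
    (hEG : Wᴴ * Gt * W = Matrix.diagonal (fun k => (μ k : ℂ))) :
    Wᴴ * NormedSpace.exp (-Gt) * W = Matrix.diagonal (fun k => (Real.exp (-μ k) : ℂ)) := by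
  have hWu : Wᴴ * NormedSpace.exp (-Gt) * W = NormedSpace.exp (Wᴴ * (-Gt) * W) := by
    let Wu : (Mat n)ˣ := ⟨W, Wᴴ, h2, h1⟩
    exact (Matrix.exp_units_conj' Wu (-Gt)).symm
  rw [hWu]
  have hd : Wᴴ * (-Gt) * W = Matrix.diagonal (fun k => -(μ k : ℂ)) := by
    rw [Matrix.mul_neg, Matrix.neg_mul, hEG]
    simp [Matrix.diagonal_neg]
  rw [hd, Matrix.exp_diagonal]
  have hfun : NormedSpace.exp (fun k : Fin n => -(μ k : ℂ)) = fun k => (Real.exp (-μ k) : ℂ) := by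
    funext k
    rw [Pi.coe_exp, ← Complex.exp_eq_exp_ℂ]
    push_cast [Complex.ofReal_exp]
    ring_nf
  rw [hfun]

lemma Hm_herm {n K : ℕ} (H : Fin K → Mat n) (hH : ∀ k, (H k).IsHermitian) (φ : Fin K → ℝ) :
    (Hm H φ).IsHermitian := by
  unfold Hm Matrix.IsHermitian
  rw [Matrix.conjTranspose_sum]
  refine Finset.sum_congr rfl fun k _ => ?_
  simp [Matrix.conjTranspose_smul, Complex.star_def, Complex.conj_ofReal, (hH k).eq]

lemma uH_dag {n K : ℕ} (H : Fin K → Mat n) (hH : ∀ k, (H k).IsHermitian) (φ : Fin K → ℝ) :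
    (uH H φ)ᴴ = uH' H φ := by
  rw [uH, uH', ← Matrix.exp_conjTranspose]
  congr 1
  simp [Matrix.conjTranspose_neg, Matrix.conjTranspose_smul, Complex.star_def, Complex.conj_I,
    (Hm_herm H hH φ).eq]

lemma uH'_mul_uH {n K : ℕ} (H : Fin K → Mat n) (φ : Fin K → ℝ) :
    uH' H φ * uH H φ = 1 := by
  rw [uH, uH', ← neg_smul, exp_smul_mul]
  simp [NormedSpace.exp_zero]

lemma uH_mul_uH' {n K : ℕ} (H : Fin K → Mat n) (φ : Fin K → ℝ) :
    uH H φ * uH' H φ = 1 := by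
  rw [uH, uH', ← neg_smul, exp_smul_mul]
  simp [NormedSpace.exp_zero]

lemma scalar_term {n : ℕ} (hn : 1 ≤ n) (μ : Fin n → ℝ) (k l : Fin n) (a b g : ℂ) :
    ((cKM (lamd μ k) (lamd μ l) : ℝ) : ℂ) *
      ((-(1/2 : ℂ)) * (a * ((lamd μ l : ℝ) : ℂ) + ((lamd μ k : ℝ) : ℂ) * a)
        + g * (if k = l then ((lamd μ k : ℝ) : ℂ) else 0)) *
      (Complex.I * (((lamd μ l : ℝ) : ℂ) * b - b * ((lamd μ k : ℝ) : ℂ)))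
    = Complex.I / 2 * (a * (((μ l : ℝ) : ℂ) * b - b * ((μ k : ℝ) : ℂ)) * ((lamd μ k : ℝ) : ℂ)
        + (((μ l : ℝ) : ℂ) * b - b * ((μ k : ℝ) : ℂ)) * a * ((lamd μ l : ℝ) : ℂ)) := by
  have : Nonempty (Fin n) := ⟨⟨0, hn⟩⟩
  have hZpos : 0 < ∑ m, Real.exp (-μ m) :=
    Finset.sum_pos (fun i _ => Real.exp_pos _) Finset.univ_nonempty
  rcases eq_or_ne (μ k) (μ l) with hμ | hμ
  · have hlam : lamd μ k = lamd μ l := by simp [lamd, hμ]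
    rw [hlam, hμ]
    ring
  · have hkl : k ≠ l := fun h => hμ (by rw [h])
    have hlamne : lamd μ k ≠ lamd μ l := by
      intro h
      apply hμ
      unfold lamd at h
      field_simp at h
      simpa using h
    have hc : cKM (lamd μ k) (lamd μ l) = (μ l - μ k) / (lamd μ k - lamd μ l) := by
      rw [cKM, if_neg hlamne]
      congr 1
      unfold lamd
      rw [Real.log_div (Real.exp_ne_zero _) (ne_of_gt hZpos),
        Real.log_div (Real.exp_ne_zero _) (ne_of_gt hZpos), Real.log_exp, Real.log_exp]
      ring
    rw [hc, if_neg hkl]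
    have hne : ((lamd μ k : ℝ) : ℂ) - ((lamd μ l : ℝ) : ℂ) ≠ 0 := by
      rw [sub_ne_zero]
      exact_mod_cast hlamne
    push_cast
    field_simp
    ring

end Aux

/-- Kubo–Mori information matrix elements of the evolved quantum Boltzmann machine with
respect to mixed `θ` and `φ` parameters:
`I^KM_{ij}(θ,φ) = (i/2)⟨{Φ_θ(G_i), [G(θ), Ψ_φ†(H_j)]}⟩_{ρ(θ)}`. -/
theorem stmt18 {n J K : ℕ} (hn : 1 ≤ n) (hJ : 1 ≤ J) (hK : 1 ≤ K)
    (G : Fin J → Mat n) (H : Fin K → Mat n)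
    (hG : ∀ j, (G j).IsHermitian) (hH : ∀ k, (H k).IsHermitian)
    (θ : Fin J → ℝ) (φ : Fin K → ℝ)
    (u : Fin n → Fin n → ℂ) (μ : Fin n → ℝ)
    (hortho : ∀ k l, dotc (u k) (u l) = if k = l then 1 else 0)
    (heig : ∀ k, (Gm G θ).mulVec (u k) = (μ k : ℂ) • u k)
    (i : Fin J) (j : Fin K) :
    ∑ k, ∑ l, ((cKM (lamd μ k) (lamd μ l) : ℝ) : ℂ) *
        dotc ((uH H φ).mulVec (u k)) ((Pθ G H θ φ i).mulVec ((uH H φ).mulVec (u l))) *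
        dotc ((uH H φ).mulVec (u l)) ((Pφ G H θ φ j).mulVec ((uH H φ).mulVec (u k)))
      = Complex.I / 2 *
          Matrix.trace ((chanΦ G θ (G i) *
              (Gm G θ * chanΨdag H φ (H j) - chanΨdag H φ (H j) * Gm G θ)
            + (Gm G θ * chanΨdag H φ (H j) - chanΨdag H φ (H j) * Gm G θ) *
              chanΦ G θ (G i)) * qbm G θ) := by
  classical
  have hnn : Nonempty (Fin n) := ⟨⟨0, hn⟩⟩
  set W : Mat n := Matrix.of fun m k => u k m with hW
  have h1 : Wᴴ * W = 1 := ortho_unitary u hortho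
  have h2 : W * Wᴴ = 1 := mul_eq_one_comm.mp h1
  have hcW : ∀ X : Mat n, W * (Wᴴ * X) = X := fun X => by rw [← mul_assoc, h2, one_mul]
  have hE_mul : ∀ M N : Mat n, Wᴴ * (M * N) * W = (Wᴴ * M * W) * (Wᴴ * N * W) := by
    intro M N
    simp only [mul_assoc, hcW]
  have hE_trace : ∀ M : Mat n, Matrix.trace (Wᴴ * M * W) = Matrix.trace M := by
    intro M
    rw [Matrix.trace_mul_cycle, h2, one_mul]
  -- unitary facts
  have hUdag : (uH H φ)ᴴ = uH' H φ := uH_dag H hH φ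
  have hU'U : uH' H φ * uH H φ = 1 := uH'_mul_uH H φ
  -- entries via eigenbasis
  have hdot : ∀ (M : Mat n) (k l : Fin n),
      dotc ((uH H φ).mulVec (u k)) (M.mulVec ((uH H φ).mulVec (u l)))
        = (Wᴴ * (uH' H φ * M * uH H φ) * W) k l := by
    intro M k l
    rw [dotc_mulVec, hUdag, Matrix.mulVec_mulVec, Matrix.mulVec_mulVec, hW, entry_eq]
  -- eigen-diagonalization
  have hWG : Gm G θ * W = W * Matrix.diagonal (fun k => (μ k : ℂ)) := eig_mul_W _ u μ heig
  have hEG : Wᴴ * Gm G θ * W = Matrix.diagonal (fun k => (μ k : ℂ)) := by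
    rw [mul_assoc, hWG, ← mul_assoc, h1, one_mul]
  have hEexp : Wᴴ * NormedSpace.exp (-(Gm G θ)) * W
      = Matrix.diagonal (fun k => (Real.exp (-μ k) : ℂ)) :=
    exp_diag_of_conj (Gm G θ) W μ h1 h2 hEG
  have htr : Matrix.trace (NormedSpace.exp (-(Gm G θ)))
      = ((∑ m, Real.exp (-μ m) : ℝ) : ℂ) := by
    rw [← hE_trace, hEexp, Matrix.trace_diagonal]
    push_cast
    rfl
  have hZpos : 0 < ∑ m, Real.exp (-μ m) :=
    Finset.sum_pos (fun i _ => Real.exp_pos _) Finset.univ_nonempty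
  have hZ : Zpf G θ = ∑ m, Real.exp (-μ m) := by
    rw [Zpf, htr, Complex.ofReal_re]
  have hErho : Wᴴ * qbm G θ * W = Matrix.diagonal (fun k => ((lamd μ k : ℝ) : ℂ)) := by
    rw [qbm, Matrix.mul_smul, Matrix.smul_mul, hEexp, hZ]
    ext k l
    by_cases hkl : k = l
    · subst hkl
      simp only [Matrix.smul_apply, Matrix.diagonal_apply_eq, smul_eq_mul, lamd]
      push_cast
      rw [div_eq_inv_mul]
    · simp [Matrix.smul_apply, Matrix.diagonal_apply_ne _ hkl]
  -- conjugated channels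
  have hPsi : uH' H φ * chanΨ H φ (H j) * uH H φ = chanΨdag H φ (H j) := by
    rw [chanΨ, chanΨdag, uH, uH']
    exact conj_chanPsi (Hm H φ) (H j)
  -- conjugated derivatives
  have hPt : uH' H φ * Pθ G H θ φ i * uH H φ
      = (-(1 / 2 : ℂ)) • (chanΦ G θ (G i) * qbm G θ + qbm G θ * chanΦ G θ (G i))
        + (Matrix.trace (G i * qbm G θ)) • qbm G θ := by
    simp only [Pθ, eqbm]
    exact alg1 _ _ _ _ _ _ hU'U
  have hPp : uH' H φ * Pφ G H θ φ j * uH H φ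
      = Complex.I • (qbm G θ * chanΨdag H φ (H j) - chanΨdag H φ (H j) * qbm G θ) := by
    simp only [Pφ, eqbm]
    rw [alg2 _ _ _ _ hU'U, hPsi]
  -- abbreviations for conjugated matrices
  set Φ' : Mat n := Wᴴ * chanΦ G θ (G i) * W with hPhi'
  set A' : Mat n := Wᴴ * chanΨdag H φ (H j) * W with hA'
  -- split into entries
  have hsplit1 : Wᴴ * ((-(1 / 2 : ℂ)) • (chanΦ G θ (G i) * qbm G θ + qbm G θ * chanΦ G θ (G i))
        + (Matrix.trace (G i * qbm G θ)) • qbm G θ) * W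
      = (-(1 / 2 : ℂ)) • (Φ' * Matrix.diagonal (fun k => ((lamd μ k : ℝ) : ℂ))
          + Matrix.diagonal (fun k => ((lamd μ k : ℝ) : ℂ)) * Φ')
        + (Matrix.trace (G i * qbm G θ)) • Matrix.diagonal (fun k => ((lamd μ k : ℝ) : ℂ)) := by
    simp only [Matrix.mul_add, Matrix.add_mul, Matrix.mul_smul, Matrix.smul_mul, hE_mul, hErho]
    rfl
  have hsplit2 : Wᴴ * (Complex.I • (qbm G θ * chanΨdag H φ (H j)
        - chanΨdag H φ (H j) * qbm G θ)) * W
      = Complex.I • (Matrix.diagonal (fun k => ((lamd μ k : ℝ) : ℂ)) * A'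
          - A' * Matrix.diagonal (fun k => ((lamd μ k : ℝ) : ℂ))) := by
    simp only [Matrix.mul_sub, Matrix.sub_mul, Matrix.mul_smul, Matrix.smul_mul, hE_mul, hErho]
    rfl
  -- entrywise formulas
  have hent1 : ∀ k l : Fin n,
      dotc ((uH H φ).mulVec (u k)) ((Pθ G H θ φ i).mulVec ((uH H φ).mulVec (u l)))
        = (-(1 / 2 : ℂ)) * (Φ' k l * ((lamd μ l : ℝ) : ℂ) + ((lamd μ k : ℝ) : ℂ) * Φ' k l)
          + (Matrix.trace (G i * qbm G θ)) * (if k = l then ((lamd μ k : ℝ) : ℂ) else 0) := by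
    intro k l
    rw [hdot, hPt, hsplit1]
    simp only [Matrix.add_apply, Matrix.smul_apply, Matrix.mul_diagonal, Matrix.diagonal_mul,
      Matrix.diagonal_apply, smul_eq_mul]
  have hent2 : ∀ l k : Fin n,
      dotc ((uH H φ).mulVec (u l)) ((Pφ G H θ φ j).mulVec ((uH H φ).mulVec (u k)))
        = Complex.I * (((lamd μ l : ℝ) : ℂ) * A' l k - A' l k * ((lamd μ k : ℝ) : ℂ)) := by
    intro l k
    rw [hdot, hPp, hsplit2]
    simp only [Matrix.sub_apply, Matrix.smul_apply, Matrix.mul_diagonal, Matrix.diagonal_mul,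
      smul_eq_mul]
  -- right-hand side trace
  have hB : Wᴴ * (Gm G θ * chanΨdag H φ (H j) - chanΨdag H φ (H j) * Gm G θ) * W
      = Matrix.diagonal (fun k => (μ k : ℂ)) * A' - A' * Matrix.diagonal (fun k => (μ k : ℂ)) := by
    simp only [Matrix.mul_sub, Matrix.sub_mul, hE_mul, hEG]
    rfl
  have hRT : Matrix.trace ((chanΦ G θ (G i) *
        (Gm G θ * chanΨdag H φ (H j) - chanΨdag H φ (H j) * Gm G θ)
      + (Gm G θ * chanΨdag H φ (H j) - chanΨdag H φ (H j) * Gm G θ) *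
        chanΦ G θ (G i)) * qbm G θ)
      = ∑ k, ∑ l, (Φ' k l * (((μ l : ℝ) : ℂ) * A' l k - A' l k * ((μ k : ℝ) : ℂ))
            * ((lamd μ k : ℝ) : ℂ)
          + (((μ l : ℝ) : ℂ) * A' l k - A' l k * ((μ k : ℝ) : ℂ)) * Φ' k l
            * ((lamd μ l : ℝ) : ℂ)) := by
    rw [← hE_trace]
    rw [hE_mul, hErho]
    rw [show Wᴴ * (chanΦ G θ (G i) *
          (Gm G θ * chanΨdag H φ (H j) - chanΨdag H φ (H j) * Gm G θ)
        + (Gm G θ * chanΨdag H φ (H j) - chanΨdag H φ (H j) * Gm G θ) *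
          chanΦ G θ (G i)) * W
        = Φ' * (Matrix.diagonal (fun k => (μ k : ℂ)) * A'
              - A' * Matrix.diagonal (fun k => (μ k : ℂ)))
          + (Matrix.diagonal (fun k => (μ k : ℂ)) * A'
              - A' * Matrix.diagonal (fun k => (μ k : ℂ))) * Φ' from by
      simp only [Matrix.mul_add, Matrix.add_mul, hE_mul, hB]; rfl]
    set B' : Mat n := Matrix.diagonal (fun k => (μ k : ℂ)) * A'
        - A' * Matrix.diagonal (fun k => (μ k : ℂ)) with hB'
    have hBent : ∀ l k : Fin n, B' l k
        = ((μ l : ℝ) : ℂ) * A' l k - A' l k * ((μ k : ℝ) : ℂ) := by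
      intro l k
      simp [hB', Matrix.sub_apply, Matrix.mul_diagonal, Matrix.diagonal_mul]
    have step1 : Matrix.trace ((Φ' * B' + B' * Φ')
          * Matrix.diagonal (fun k => ((lamd μ k : ℝ) : ℂ)))
        = ∑ k, ((∑ l, Φ' k l * B' l k) + ∑ l, B' k l * Φ' l k)
            * ((lamd μ k : ℝ) : ℂ) := by
      simp only [Matrix.trace, Matrix.diag_apply, Matrix.mul_diagonal, Matrix.add_apply]
      simp only [Matrix.mul_apply]
    rw [step1]
    have step2 : ∑ k, ((∑ l, Φ' k l * B' l k) + ∑ l, B' k l * Φ' l k)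
            * ((lamd μ k : ℝ) : ℂ)
        = (∑ k, ∑ l, Φ' k l * B' l k * ((lamd μ k : ℝ) : ℂ))
          + ∑ k, ∑ l, B' k l * Φ' l k * ((lamd μ k : ℝ) : ℂ) := by
      rw [← Finset.sum_add_distrib]
      refine Finset.sum_congr rfl fun k _ => ?_
      rw [add_mul, Finset.sum_mul, Finset.sum_mul]
    rw [step2]
    rw [show (∑ k, ∑ l, B' k l * Φ' l k * ((lamd μ k : ℝ) : ℂ))
        = ∑ k, ∑ l, B' l k * Φ' k l * ((lamd μ l : ℝ) : ℂ) from Finset.sum_comm]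
    rw [← Finset.sum_add_distrib]
    refine Finset.sum_congr rfl fun k _ => ?_
    rw [← Finset.sum_add_distrib]
    refine Finset.sum_congr rfl fun l _ => ?_
    rw [hBent]
  -- put everything together
  rw [hRT, Finset.mul_sum]
  refine Finset.sum_congr rfl fun k _ => ?_
  rw [Finset.mul_sum]
  refine Finset.sum_congr rfl fun l _ => ?_
  rw [hent1, hent2]
  exact scalar_term hn μ k l (Φ' k l) (A' l k) (Matrix.trace (G i * qbm G θ))


end
end

section
/- For every γ ∈ ℝ^L and i, j ∈ {1,…,L}: if the map ε ↦ −2·ln|⟨ψ(γ), ψ(γ+ε)⟩|² is twice continuously differentiable on a neighborhood of ε = 0, then its mixed second partial derivative ∂²/∂ε_i∂ε_j at ε = 0 equals 4·Re[⟨∂_iψ(γ), ∂_jψ(γ)⟩ − ⟨∂_iψ(γ), ψ(γ)⟩⟨ψ(γ), ∂_jψ(γ)⟩]. -/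
open Matrix

noncomputable section

/-- The standard basis vector `e_i` of `ℝ^L`. -/
def stdBasis {L : ℕ} (i : Fin L) : Fin L → ℝ := Pi.single i 1

/-- The mixed second partial derivative `∂²g/∂ε_i∂ε_j` at `0`: the derivative at `0` of
`s ↦ (derivative at 0 of t ↦ g (s·e_i + t·e_j))`. -/
def mixed2 {L : ℕ} (g : (Fin L → ℝ) → ℝ) (i j : Fin L) : ℝ :=
  deriv (fun s : ℝ => deriv (fun t : ℝ => g (s • stdBasis i + t • stdBasis j)) 0) 0

lemma dotc_conj {n : ℕ} (x y : Fin n → ℂ) : (starRingEnd ℂ) (dotc x y) = dotc y x := by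
  simp [dotc, map_sum, _root_.map_mul, mul_comm]

lemma hasDerivAt_dotc {n : ℕ} {z y : ℝ → (Fin n → ℂ)} {z' y' : Fin n → ℂ} {t : ℝ}
    (hz : HasDerivAt z z' t) (hy : HasDerivAt y y' t) :
    HasDerivAt (fun t => dotc (z t) (y t)) (dotc z' (y t) + dotc (z t) y') t := by
  have hc : ∀ m : Fin n, HasDerivAt (fun t => (starRingEnd ℂ) (z t m) * (y t m))
      ((starRingEnd ℂ) (z' m) * y t m + (starRingEnd ℂ) (z t m) * y' m) t := by
    intro m
    have hzm : HasDerivAt (fun t => z t m) (z' m) t :=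
      (ContinuousLinearMap.proj m : ((Fin n → ℂ)) →L[ℝ] ℂ).hasFDerivAt.comp_hasDerivAt t hz
    have hym : HasDerivAt (fun t => y t m) (y' m) t :=
      (ContinuousLinearMap.proj m : ((Fin n → ℂ)) →L[ℝ] ℂ).hasFDerivAt.comp_hasDerivAt t hy
    have hzc : HasDerivAt (fun t => (starRingEnd ℂ) (z t m)) ((starRingEnd ℂ) (z' m)) t := by
      have := (Complex.conjCLE.toContinuousLinearMap.hasFDerivAt).comp_hasDerivAt t hzm
      exact this
    exact hzc.mul hym
  have := HasDerivAt.fun_sum (fun m (_ : m ∈ Finset.univ) => hc m)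
  simpa [dotc, Finset.sum_add_distrib] using this

lemma hasDerivAt_normSq {F : ℝ → ℂ} {F' : ℂ} {t : ℝ} (h : HasDerivAt F F' t) :
    HasDerivAt (fun t => Complex.normSq (F t)) (2 * ((starRingEnd ℂ) (F t) * F').re) t := by
  have hre : HasDerivAt (fun t => (F t).re) F'.re t :=
    (Complex.reCLM.hasFDerivAt).comp_hasDerivAt t h
  have him : HasDerivAt (fun t => (F t).im) F'.im t :=
    (Complex.imCLM.hasFDerivAt).comp_hasDerivAt t h
  have := (hre.fun_mul hre).fun_add (him.fun_mul him)
  have h2 : (fun t => (F t).re * (F t).re + (F t).im * (F t).im)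
      = fun t => Complex.normSq (F t) := by
    funext t; rw [Complex.normSq_apply]
  rw [h2] at this
  refine this.congr_deriv ?_
  simp [Complex.mul_re]
  ring

/-- The Fisher–Bures information of a pure-state family: the mixed second partial derivative
at `ε = 0` of `ε ↦ −2 ln |⟨ψ(γ), ψ(γ+ε)⟩|²` equals
`4 Re[⟨∂_iψ(γ), ∂_jψ(γ)⟩ − ⟨∂_iψ(γ), ψ(γ)⟩⟨ψ(γ), ∂_jψ(γ)⟩]`. -/
theorem stmt19 {n L : ℕ} (hn : 1 ≤ n) (hL : 1 ≤ L)
    (ψ : (Fin L → ℝ) → (Fin n → ℂ))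
    (hψC : ContDiff ℝ 2 ψ)
    (hψu : ∀ γ, dotc (ψ γ) (ψ γ) = 1)
    (γ : Fin L → ℝ) (i j : Fin L)
    (hC2 : ContDiffAt ℝ 2
      (fun ε : Fin L → ℝ => -2 * Real.log (‖dotc (ψ γ) (ψ (γ + ε))‖ ^ 2)) 0) :
    mixed2 (fun ε => -2 * Real.log (‖dotc (ψ γ) (ψ (γ + ε))‖ ^ 2)) i j
      = 4 * (dotc (fderiv ℝ ψ γ (stdBasis i)) (fderiv ℝ ψ γ (stdBasis j))
          - dotc (fderiv ℝ ψ γ (stdBasis i)) (ψ γ) * dotc (ψ γ) (fderiv ℝ ψ γ (stdBasis j))).re := by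
  classical
  set e : Fin L → ℝ := stdBasis i with he
  set e' : Fin L → ℝ := stdBasis j with he'
  set w : Fin n → ℂ := ψ γ with hw
  have hψd : Differentiable ℝ ψ := hψC.differentiable (by norm_num)
  have line : ∀ (x d : Fin L → ℝ) (t₀ : ℝ), HasDerivAt (fun t : ℝ => x + t • d) d t₀ := by
    intro x d t₀
    simpa using ((hasDerivAt_id t₀).smul_const d).const_add x
  have curve : ∀ (x d : Fin L → ℝ) (t₀ : ℝ),
      HasDerivAt (fun t : ℝ => ψ (x + t • d)) (fderiv ℝ ψ (x + t₀ • d) d) t₀ := by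
    intro x d t₀
    exact (hψd.differentiableAt.hasFDerivAt).comp_hasDerivAt t₀ (line x d t₀)
  set D2 : (Fin L → ℝ) → (Fin n → ℂ) := fun x => fderiv ℝ ψ x e' with hD2def
  have hfd : ContDiff ℝ 1 (fun x => fderiv ℝ ψ x) := hψC.fderiv_right (by norm_num)
  have hD2 : Differentiable ℝ D2 :=
    ((ContinuousLinearMap.apply ℝ (Fin n → ℂ) e').contDiff.comp hfd).differentiable one_ne_zero
  -- first-order unitarity constraint
  have K1 : ∀ x : Fin L → ℝ, dotc (D2 x) (ψ x) + dotc (ψ x) (D2 x) = 0 := by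
    intro x
    have h1 : HasDerivAt (fun t : ℝ => ψ (x + t • e')) (D2 x) 0 := by
      simpa using curve x e' 0
    have h2 := hasDerivAt_dotc h1 h1
    simp only [zero_smul, add_zero] at h2
    have h3 : (fun t : ℝ => dotc (ψ (x + t • e')) (ψ (x + t • e'))) = fun _ => (1 : ℂ) :=
      funext fun t => hψu _
    rw [h3] at h2
    exact h2.unique (hasDerivAt_const 0 (1 : ℂ))
  set A : Fin n → ℂ := fderiv ℝ ψ γ e with hA
  set V0 : Fin n → ℂ := fderiv ℝ ψ γ e' with hV0
  set V' : Fin n → ℂ := fderiv ℝ D2 γ e with hV'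
  have hγ0 : γ + (0 : ℝ) • e = γ := by simp
  have hcurveu : HasDerivAt (fun s : ℝ => ψ (γ + s • e)) A 0 := by
    simpa [hγ0] using curve γ e 0
  have hcurveV : HasDerivAt (fun s : ℝ => D2 (γ + s • e)) V' 0 := by
    have := (hD2.differentiableAt.hasFDerivAt).comp_hasDerivAt 0 (line γ e 0)
    simpa [hγ0, Function.comp_def] using this
  have hD2γ : D2 γ = V0 := rfl
  -- second-order constraint
  have K2 : (dotc w V').re + (dotc A V0).re = 0 := by
    have hΦ := (hasDerivAt_dotc hcurveV hcurveu).fun_add (hasDerivAt_dotc hcurveu hcurveV)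
    simp only [zero_smul, add_zero, hγ0] at hΦ
    have h3 : (fun s : ℝ => dotc (D2 (γ + s • e)) (ψ (γ + s • e))
        + dotc (ψ (γ + s • e)) (D2 (γ + s • e))) = fun _ => (0 : ℂ) :=
      funext fun s => K1 _
    rw [h3] at hΦ
    have h4 := hΦ.unique (hasDerivAt_const 0 (0 : ℂ))
    have h5 := congrArg Complex.re h4
    simp only [Complex.add_re, Complex.zero_re, hD2γ] at h5
    have e1 : (dotc V' w).re = (dotc w V').re := by
      rw [← dotc_conj w V', Complex.conj_re]
    have e2 : (dotc V0 A).re = (dotc A V0).re := by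
      rw [← dotc_conj A V0, Complex.conj_re]
    rw [← hw] at h5
    linarith [h5]
  have hRe0 : (dotc w V0).re = 0 := by
    have := congrArg Complex.re (K1 γ)
    simp only [Complex.add_re, Complex.zero_re, hD2γ, ← hw] at this
    have e1 : (dotc V0 w).re = (dotc w V0).re := by
      rw [← dotc_conj w V0, Complex.conj_re]
    linarith
  -- the objects F, b, P
  set F : ℝ → ℂ := fun s => dotc w (ψ (γ + s • e)) with hF
  set b : ℝ → ℂ := fun s => dotc w (D2 (γ + s • e)) with hb
  have hF0 : F 0 = 1 := by
    simp only [hF]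
    rw [hγ0, hw]
    exact hψu γ
  have hFd : HasDerivAt F (dotc w A) 0 := by
    have := hasDerivAt_dotc (hasDerivAt_const (0:ℝ) w) hcurveu
    simpa [dotc, hF] using this
  have hbd : HasDerivAt b (dotc w V') 0 := by
    have := hasDerivAt_dotc (hasDerivAt_const (0:ℝ) w) hcurveV
    simpa [dotc, hb] using this
  set P : ℝ → ℝ :=
    fun s => -2 * (2 * ((starRingEnd ℂ) (F s) * b s).re / Complex.normSq (F s)) with hP
  -- inner derivative
  have hinner : ∀ s : ℝ, F s ≠ 0 →
      deriv (fun t : ℝ =>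
        -2 * Real.log (‖dotc w (ψ (γ + (s • e + t • e')))‖ ^ 2)) 0 = P s := by
    intro s hs
    have hft : HasDerivAt (fun t : ℝ => dotc w (ψ ((γ + s • e) + t • e'))) (b s) 0 := by
      have := hasDerivAt_dotc (hasDerivAt_const (0:ℝ) w) (curve (γ + s • e) e' 0)
      simpa [dotc, hb, hD2def] using this
    have hns := hasDerivAt_normSq hft
    have hns' : Complex.normSq (dotc w (ψ (γ + s • e + (0:ℝ) • e'))) ≠ 0 := by
      simp only [zero_smul, add_zero]
      exact fun h => hs (Complex.normSq_eq_zero.mp h)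
    have hlog : HasDerivAt (fun t : ℝ =>
        -2 * Real.log (Complex.normSq (dotc w (ψ ((γ + s • e) + t • e'))))) (P s) 0 := by
      have h := (hns.log hns').const_mul (-2 : ℝ)
      refine h.congr_deriv ?_
      rw [hP]
      simp only [zero_smul, add_zero]
      rfl
    have hfun : (fun t : ℝ =>
        -2 * Real.log (‖dotc w (ψ (γ + (s • e + t • e')))‖ ^ 2))
        = fun t : ℝ => -2 * Real.log (Complex.normSq (dotc w (ψ ((γ + s • e) + t • e')))) := by
      funext t
      rw [Complex.sq_norm, add_assoc]
    rw [hfun]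
    exact hlog.deriv
  have hne : ∀ᶠ s in nhds (0:ℝ), F s ≠ 0 :=
    hFd.continuousAt.eventually_ne (by rw [hF0]; exact one_ne_zero)
  have houter : (fun s : ℝ => deriv (fun t : ℝ =>
      -2 * Real.log (‖dotc w (ψ (γ + (s • e + t • e')))‖ ^ 2)) 0)
      =ᶠ[nhds (0:ℝ)] P := hne.mono fun s hs => hinner s hs
  have hmx : mixed2 (fun ε => -2 * Real.log (‖dotc w (ψ (γ + ε))‖ ^ 2)) i j
      = deriv P 0 := by
    unfold mixed2
    exact houter.deriv_eq
  rw [hmx]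
  -- compute deriv P 0
  have hb0 : b 0 = dotc w V0 := by rw [hb]; simp only [hγ0, hD2γ]
  have hconjF : HasDerivAt (fun s => (starRingEnd ℂ) (F s)) ((starRingEnd ℂ) (dotc w A)) 0 := by
    have := (Complex.conjCLE.toContinuousLinearMap.hasFDerivAt).comp_hasDerivAt 0 hFd
    exact this
  have hmul := hconjF.mul hbd
  have hnum : HasDerivAt (fun s => ((starRingEnd ℂ) (F s) * b s).re)
      ((starRingEnd ℂ) (dotc w A) * b 0 + (starRingEnd ℂ) (F 0) * dotc w V').re 0 :=
    (Complex.reCLM.hasFDerivAt).comp_hasDerivAt 0 hmul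
  have hden := hasDerivAt_normSq hFd
  have hden0 : Complex.normSq (F 0) ≠ 0 := by rw [hF0]; simp
  have hPd : HasDerivAt P
      (-2 * ((2 * (((starRingEnd ℂ) (dotc w A) * b 0
          + (starRingEnd ℂ) (F 0) * dotc w V').re) * Complex.normSq (F 0)
        - 2 * (((starRingEnd ℂ) (F 0) * b 0).re)
            * (2 * (((starRingEnd ℂ) (F 0)) * (dotc w A)).re)) / Complex.normSq (F 0) ^ 2)) 0 := by
    rw [hP]
    exact ((hnum.const_mul (2:ℝ)).div hden hden0).const_mul (-2 : ℝ)
  rw [hPd.deriv]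
  -- final algebra
  have hcA : (starRingEnd ℂ) (dotc w A) = dotc A w := dotc_conj w A
  rw [hF0, hb0, hcA]
  simp only [_root_.map_one, one_mul, Complex.normSq_one, one_pow, mul_one, div_one,
    Complex.add_re, Complex.sub_re]
  rw [hRe0]
  linarith [K2]

end
end
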